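/- Property II: For any function f : {1,…,C} → ℝ and φ ∈ ℝ^C, the expected reward E(φ) := E_{z~Cat(σ(φ))}[f(z)] = Σ_{i=1}^C f(i) σ(φ)_i equals E_{π~Dir(1_C)}[f(argmin_i π_i e^{-φ_i})]. -/

import Mathlib

open MeasureTheory ProbabilityTheory

/-- Tie-breaking argmin over `Fin C` (the argmin is a.s. unique in all statements below). -/
noncomputable def argminF {C : ℕ} [NeZero C] (v : Fin C → ℝ) : Fin C :=
  (Finset.exists_min_image Finset.univ v Finset.univ_nonempty).choose

/-- The softmax function. -/
noncomputable def softmax {C : ℕ} (φ : Fin C → ℝ) (c : Fin C) : ℝ :=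
  Real.exp (φ c) / ∑ i, Real.exp (φ i)

/-- The symmetric Dirichlet distribution `Dir(1_C)`, realized as normalized iid Exp(1). -/
noncomputable def dirichletOne (C : ℕ) : Measure (Fin C → ℝ) :=
  Measure.map (fun ε i => ε i / ∑ j, ε j) (Measure.pi fun _ => expMeasure 1)

/-- Pseudo action `z^{c⇌j}`: argmin after swapping coordinates `c` and `j` of `π`. -/
noncomputable def zswap {C : ℕ} [NeZero C] (φ π : Fin C → ℝ) (c j : Fin C) : Fin C :=
  argminF (fun i => π (Equiv.swap c j i) * Real.exp (-φ i))

set_option linter.unusedSectionVars false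

section DirichletAux
open Real Set
open scoped ENNReal

section Aux
variable {C : ℕ} [NeZero C]

lemma argminF_le (v : Fin C → ℝ) (j : Fin C) : v (argminF v) ≤ v j :=
  (Finset.exists_min_image Finset.univ v Finset.univ_nonempty).choose_spec.2 j (Finset.mem_univ j)

lemma argminF_eq_of_strict {v : Fin C → ℝ} {c : Fin C}
    (h : ∀ j, j ≠ c → v c < v j) : argminF v = c := by
  by_contra hne
  exact absurd (argminF_le v c) (not_le.2 (h _ hne))

/-- The event that `c` is the strict argmin of `π i * exp (-φ i)`. -/
def Aset (φ : Fin C → ℝ) (c : Fin C) : Set (Fin C → ℝ) :=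
  {ε | ∀ j, j ≠ c → ε c * Real.exp (-φ c) < ε j * Real.exp (-φ j)}

lemma measurableSet_Aset (φ : Fin C → ℝ) (c : Fin C) : MeasurableSet (Aset φ c) := by
  have : Aset φ c = ⋂ j, ⋂ (_ : j ≠ c),
      {ε : Fin C → ℝ | ε c * Real.exp (-φ c) < ε j * Real.exp (-φ j)} := by
    ext ε; simp [Aset]
  rw [this]
  exact MeasurableSet.iInter fun j => MeasurableSet.iInter fun _ =>
    measurableSet_lt ((measurable_pi_apply c).mul_const _) ((measurable_pi_apply j).mul_const _)

lemma Aset_unique {φ : Fin C → ℝ} {c c' : Fin C} {x : Fin C → ℝ}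
    (h : x ∈ Aset φ c) (h' : x ∈ Aset φ c') : c = c' := by
  by_contra hne
  have h1 := h c' (Ne.symm hne)
  have h2 := h' c hne
  linarith

lemma argminF_of_mem_Aset {φ : Fin C → ℝ} {c : Fin C} {x : Fin C → ℝ} (h : x ∈ Aset φ c) :
    argminF (fun i => x i * Real.exp (-φ i)) = c :=
  argminF_eq_of_strict fun j hj => h j hj

end Aux

section ExpFacts

lemma exp_Iic (x : ℝ) :
    expMeasure 1 (Set.Iic x) = ENNReal.ofReal (if 0 ≤ x then 1 - Real.exp (-x) else 0) := by
  haveI := isProbabilityMeasure_expMeasure (one_pos)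
  rw [← ofReal_cdf (expMeasure 1) x]
  rw [cdf_expMeasure_eq one_pos]
  simp

lemma exp_Ioi {x : ℝ} (hx : 0 ≤ x) :
    expMeasure 1 (Set.Ioi x) = ENNReal.ofReal (Real.exp (-x)) := by
  haveI := isProbabilityMeasure_expMeasure (one_pos)
  rw [← Set.compl_Iic, measure_compl measurableSet_Iic (measure_ne_top _ _), measure_univ, exp_Iic, if_pos hx]
  have h1 : Real.exp (-x) ≤ 1 := Real.exp_le_one_iff.2 (by linarith)
  rw [show (1 : ℝ≥0∞) = ENNReal.ofReal 1 by simp, ← ENNReal.ofReal_sub _ (by linarith)]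
  norm_num

lemma exp_Iic_zero : expMeasure 1 (Set.Iic 0) = 0 := by
  rw [exp_Iic]; simp

lemma exp_ae_nonneg : ∀ᵐ t ∂(expMeasure 1), 0 ≤ t := by
  rw [ae_iff]
  have : {t : ℝ | ¬ 0 ≤ t} = Set.Iio 0 := by ext t; simp
  rw [this]
  exact measure_mono_null Set.Iio_subset_Iic_self exp_Iic_zero

lemma lint_key {b : ℝ} (hb : 0 ≤ b) :
    ∫⁻ t, Set.indicator (Set.Ici 0) (fun t => ENNReal.ofReal (Real.exp (-(b * t)))) t
        ∂(expMeasure 1) = ENNReal.ofReal (1 / (1 + b)) := by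
  have h1b : (0:ℝ) < 1 + b := by linarith
  have hpdfm : ∀ r : ℝ, Measurable (exponentialPDF r) := fun r =>
    (measurable_exponentialPDFReal r).ennreal_ofReal
  have hgm : Measurable (Set.indicator (Set.Ici 0)
      (fun t => ENNReal.ofReal (Real.exp (-(b * t))))) := by
    apply Measurable.indicator _ measurableSet_Ici
    exact (((measurable_const.mul measurable_id).neg).exp).ennreal_ofReal
  rw [show expMeasure 1 = MeasureTheory.volume.withDensity (exponentialPDF 1) from rfl,
    lintegral_withDensity_eq_lintegral_mul _ (hpdfm 1) hgm]
  have hpt : ∀ t : ℝ, (exponentialPDF 1 * Set.indicator (Set.Ici 0)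
        (fun t => ENNReal.ofReal (Real.exp (-(b * t))))) t
      = ENNReal.ofReal (1 / (1 + b)) * exponentialPDF (1 + b) t := by
    intro t
    by_cases ht : 0 ≤ t
    · simp only [Pi.mul_apply, Set.indicator_of_mem (Set.mem_Ici.2 ht),
        exponentialPDF_eq, if_pos ht]
      rw [← ENNReal.ofReal_mul (by positivity), ← ENNReal.ofReal_mul (by positivity)]
      congr 1
      rw [one_mul, ← Real.exp_add, show -(1 * t) + -(b * t) = -((1+b) * t) by ring]
      field_simp
    · simp only [Pi.mul_apply, exponentialPDF_of_neg (lt_of_not_ge ht), zero_mul, mul_zero]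
  simp_rw [hpt]
  rw [lintegral_const_mul _ (hpdfm (1 + b)), lintegral_exponentialPDF_eq_one h1b, mul_one]

end ExpFacts
section Core
variable {C : ℕ} [NeZero C]

lemma softmax_aux {φ : Fin C → ℝ} {c : Fin C} :
    1 / (∑ j, Real.exp (φ j - φ c)) = softmax φ c := by
  have : ∑ j, Real.exp (φ j - φ c) = (∑ i, Real.exp (φ i)) / Real.exp (φ c) := by
    rw [Finset.sum_div]
    exact Finset.sum_congr rfl fun j _ => (Real.exp_sub _ _)
  rw [this, one_div_div, softmax]

lemma measure_Aset (φ : Fin C → ℝ) (c : Fin C) :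
    Measure.pi (fun _ : Fin C => expMeasure 1) (Aset φ c) = ENNReal.ofReal (softmax φ c) := by
  obtain ⟨n, rfl⟩ : ∃ n, C = n + 1 :=
    ⟨C - 1, (Nat.succ_pred_eq_of_pos (Nat.pos_of_ne_zero (NeZero.ne C))).symm⟩
  haveI := isProbabilityMeasure_expMeasure (one_pos)
  set a : Fin (n+1) → ℝ := fun j => Real.exp (φ j - φ c) with ha
  have ha_pos : ∀ j, 0 < a j := fun j => Real.exp_pos _
  have hiff : ∀ (x y : ℝ) (j : Fin (n+1)), (a j * x < y ↔
      x * Real.exp (-φ c) < y * Real.exp (-φ j)) := by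
    intro x y j
    have E1 : a j * x * Real.exp (-φ j) = x * Real.exp (-φ c) := by
      rw [ha]
      simp only [Real.exp_sub, Real.exp_neg]
      field_simp
    rw [← E1]
    exact (mul_lt_mul_iff_left₀ (Real.exp_pos (-φ j))).symm
  set s : Set (ℝ × (Fin n → ℝ)) :=
    {tv | ∀ j : Fin n, a (c.succAbove j) * tv.1 < tv.2 j} with hs
  have hms : MeasurableSet s := by
    have : s = ⋂ j : Fin n, {tv : ℝ × (Fin n → ℝ) | a (c.succAbove j) * tv.1 < tv.2 j} := by
      ext tv; simp [hs]
    rw [this]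
    exact MeasurableSet.iInter fun j => measurableSet_lt
      (measurable_fst.const_mul _) ((measurable_pi_apply j).comp measurable_snd)
  have hpre : Aset φ c = (MeasurableEquiv.piFinSuccAbove (fun _ : Fin (n+1) => ℝ) c) ⁻¹' s := by
    ext ε
    have hfwd : (MeasurableEquiv.piFinSuccAbove (fun _ : Fin (n+1) => ℝ) c) ε
        = (ε c, fun j => ε (c.succAbove j)) := rfl
    simp only [Aset, Set.mem_setOf_eq, Set.mem_preimage, hfwd, hs]
    constructor
    · intro h j
      exact (hiff (ε c) (ε (c.succAbove j)) (c.succAbove j)).2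
        (h (c.succAbove j) (Fin.succAbove_ne c j))
    · intro h j hj
      obtain ⟨k, rfl⟩ := Fin.exists_succAbove_eq hj
      exact (hiff (ε c) (ε (c.succAbove k)) (c.succAbove k)).1 (h k)
  rw [hpre,
    (measurePreserving_piFinSuccAbove (fun _ : Fin (n+1) => expMeasure 1) c).measure_preimage
      hms.nullMeasurableSet,
    Measure.prod_apply hms]
  have hslice : ∀ t : ℝ, (Measure.pi fun _ : Fin n => expMeasure 1) (Prod.mk t ⁻¹' s)
      = ∏ j : Fin n, expMeasure 1 (Set.Ioi (a (c.succAbove j) * t)) := by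
    intro t
    have : Prod.mk t ⁻¹' s
        = Set.pi Set.univ (fun j : Fin n => Set.Ioi (a (c.succAbove j) * t)) := by
      ext v; simp [hs, Set.mem_pi]
    rw [this, Measure.pi_pi]
  simp_rw [hslice]
  set b : ℝ := ∑ j : Fin n, a (c.succAbove j) with hbdef
  have hb : 0 ≤ b := Finset.sum_nonneg fun j _ => (ha_pos _).le
  have hFeq : ∫⁻ t, ∏ j : Fin n, expMeasure 1 (Set.Ioi (a (c.succAbove j) * t)) ∂(expMeasure 1)
      = ∫⁻ t, Set.indicator (Set.Ici 0) (fun t => ENNReal.ofReal (Real.exp (-(b * t)))) t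
          ∂(expMeasure 1) := by
    refine lintegral_congr_ae ?_
    filter_upwards [exp_ae_nonneg] with t ht
    rw [Set.indicator_of_mem (Set.mem_Ici.2 ht)]
    have heach : ∀ j : Fin n, expMeasure 1 (Set.Ioi (a (c.succAbove j) * t))
        = ENNReal.ofReal (Real.exp (-(a (c.succAbove j) * t))) := fun j =>
      exp_Ioi (mul_nonneg (ha_pos _).le ht)
    simp_rw [heach]
    rw [← ENNReal.ofReal_prod_of_nonneg (fun j _ => (Real.exp_pos _).le), ← Real.exp_sum]
    congr 2
    rw [hbdef, Finset.sum_mul, ← Finset.sum_neg_distrib]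
  rw [hFeq, lint_key hb]
  congr 1
  have hac : a c = 1 := by rw [ha]; simp
  have h1 : 1 + b = ∑ j, a j := by
    rw [Fin.sum_univ_succAbove a c, hac, ← hbdef]
  rw [h1, ha]
  exact softmax_aux

end Core
end DirichletAux

open scoped ENNReal
section Main
variable {C : ℕ} [NeZero C]

lemma softmax_nonneg (φ : Fin C → ℝ) (c : Fin C) : 0 ≤ softmax φ c := by
  unfold softmax; positivity

lemma sum_softmax (φ : Fin C → ℝ) : ∑ c, softmax φ c = 1 := by
  have hS : (0:ℝ) < ∑ i, Real.exp (φ i) :=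
    Finset.sum_pos (fun i _ => Real.exp_pos _) Finset.univ_nonempty
  unfold softmax
  rw [← Finset.sum_div, div_self hS.ne']

lemma pi_compl_pos_null :
    Measure.pi (fun _ : Fin C => expMeasure 1) {ε : Fin C → ℝ | ∀ i, 0 < ε i}ᶜ = 0 := by
  haveI := isProbabilityMeasure_expMeasure (one_pos)
  have h : {ε : Fin C → ℝ | ∀ i, 0 < ε i}ᶜ = ⋃ i, Function.eval i ⁻¹' (Set.Iic 0) := by
    ext ε
    simp [not_lt, Function.eval]
  rw [h]
  exact measure_iUnion_null fun i => Measure.pi_eval_preimage_null _ exp_Iic_zero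

end Main

theorem stmt4 {C : ℕ} [NeZero C] (φ f : Fin C → ℝ) :
    ∫ π, f (argminF (fun i => π i * Real.exp (-φ i))) ∂(dirichletOne C)
      = ∑ i, f i * softmax φ i := by
  classical
  haveI := isProbabilityMeasure_expMeasure (one_pos)
  set μ : Measure (Fin C → ℝ) := Measure.pi fun _ : Fin C => expMeasure 1 with hμ
  haveI : IsProbabilityMeasure μ := by rw [hμ]; infer_instance
  have hmeas_h : Measurable (fun ε : Fin C → ℝ => fun i => ε i / ∑ j, ε j) :=
    measurable_pi_lambda _ fun i => (measurable_pi_apply i).div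
      (Finset.measurable_sum Finset.univ fun j _ => measurable_pi_apply j)
  have hdm : dirichletOne C = Measure.map (fun ε : Fin C → ℝ => fun i => ε i / ∑ j, ε j) μ := rfl
  haveI : IsProbabilityMeasure (dirichletOne C) := by
    rw [hdm]; exact Measure.isProbabilityMeasure_map hmeas_h.aemeasurable
  have hPc : μ {ε : Fin C → ℝ | ∀ i, 0 < ε i}ᶜ = 0 := pi_compl_pos_null
  -- transfer of membership under normalization
  have htrans : ∀ ε : Fin C → ℝ, (∀ i, 0 < ε i) → ∀ c : Fin C,
      ((fun i => ε i / ∑ j, ε j) ∈ Aset φ c ↔ ε ∈ Aset φ c) := by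
    intro ε hε c
    have hS : (0:ℝ) < ∑ j, ε j := Finset.sum_pos (fun j _ => hε j) Finset.univ_nonempty
    have key : ∀ x y E E' : ℝ, ((x / ∑ j, ε j) * E < (y / ∑ j, ε j) * E' ↔ x * E < y * E') := by
      intro x y E E'
      rw [div_mul_eq_mul_div, div_mul_eq_mul_div]
      exact div_lt_div_iff_of_pos_right hS
    constructor
    · intro h j hj
      exact (key _ _ _ _).1 (h j hj)
    · intro h j hj
      exact (key _ _ _ _).2 (h j hj)
  have hUm : MeasurableSet (⋃ c, Aset φ c) := MeasurableSet.iUnion fun c => measurableSet_Aset φ c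
  -- μ of the union is 1
  have hAnull : μ ((⋃ c, Aset φ c)ᶜ) = 0 := by
    have hdisj : Pairwise (Function.onFun Disjoint fun c => Aset φ c) := fun c c' hne =>
      Set.disjoint_left.2 fun x hx hx' => hne (Aset_unique hx hx')
    have hsum : μ (⋃ c, Aset φ c) = 1 := by
      rw [hμ, measure_iUnion hdisj fun c => measurableSet_Aset φ c, tsum_fintype]
      simp_rw [measure_Aset]
      rw [← ENNReal.ofReal_sum_of_nonneg (fun c _ => softmax_nonneg φ c), sum_softmax]
      simp
    rw [measure_compl hUm (measure_ne_top _ _), measure_univ, hsum, tsub_self]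
  -- the dirichlet measure of the union complement is 0
  have hDu : (dirichletOne C) ((⋃ c, Aset φ c)ᶜ) = 0 := by
    rw [hdm, Measure.map_apply hmeas_h hUm.compl]
    have hsub : (fun ε : Fin C → ℝ => fun i => ε i / ∑ j, ε j) ⁻¹' (⋃ c, Aset φ c)ᶜ
        ⊆ {ε : Fin C → ℝ | ∀ i, 0 < ε i}ᶜ ∪ (⋃ c, Aset φ c)ᶜ := by
      intro ε hε
      rcases Classical.em (∀ i, 0 < ε i) with hp | hp
      · rcases Classical.em (ε ∈ ⋃ c, Aset φ c) with hu | hu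
        · exfalso
          obtain ⟨c, hc⟩ := Set.mem_iUnion.1 hu
          exact hε (Set.mem_iUnion.2 ⟨c, (htrans ε hp c).2 hc⟩)
        · exact Or.inr hu
      · exact Or.inl hp
    exact measure_mono_null hsub (measure_union_null hPc hAnull)
  -- ae rewrite of the integrand
  have hae : (fun π : Fin C → ℝ => f (argminF fun i => π i * Real.exp (-φ i)))
      =ᵐ[dirichletOne C] (fun π => ∑ c, (Aset φ c).indicator (fun _ => f c) π) := by
    have hmem : ∀ᵐ π ∂(dirichletOne C), π ∈ ⋃ c, Aset φ c := by
      rw [ae_iff]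
      exact hDu
    filter_upwards [hmem] with π hπ
    obtain ⟨c, hc⟩ := Set.mem_iUnion.1 hπ
    rw [argminF_of_mem_Aset hc, Finset.sum_eq_single c]
    · rw [Set.indicator_of_mem hc]
    · intro c' _ hne
      exact Set.indicator_of_notMem (fun h' => hne (Aset_unique h' hc)) _
    · intro h; exact absurd (Finset.mem_univ c) h
  rw [integral_congr_ae hae,
    integral_finset_sum _ (fun c _ => (integrable_const (f c)).indicator (measurableSet_Aset φ c))]
  have hmc : ∀ c, (dirichletOne C) (Aset φ c) = ENNReal.ofReal (softmax φ c) := by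
    intro c
    rw [hdm, Measure.map_apply hmeas_h (measurableSet_Aset φ c)]
    have hposae : ∀ᵐ ε ∂μ, (∀ i, 0 < ε i) := by
      rw [ae_iff]
      exact hPc
    have hsae : ((fun ε : Fin C → ℝ => fun i => ε i / ∑ j, ε j) ⁻¹' (Aset φ c)) =ᵐ[μ] Aset φ c := by
      filter_upwards [hposae] with ε hε
      exact propext (htrans ε hε c)
    rw [measure_congr hsae, hμ, measure_Aset]
  have hint : ∀ c : Fin C, ∫ π, (Aset φ c).indicator (fun _ => f c) π ∂(dirichletOne C)
      = softmax φ c * f c := by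
    intro c
    rw [integral_indicator_const (f c) (measurableSet_Aset φ c), measureReal_def, hmc c,
      ENNReal.toReal_ofReal (softmax_nonneg φ c), smul_eq_mul]
  rw [Finset.sum_congr rfl fun c _ => hint c]
  exact Finset.sum_congr rfl fun c _ => mul_comm _ _
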